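/- arXiv:2307.14195 — 2 statements merged into one kernel-verified Lean document; each statement's English description precedes it below -/
import Mathlib

section
/- Let ≺ be the total order on the vertices of the hypergraph H(a,b) (on the b-ary tree T(a,b) of depth a-1) given by a DFS order, with a ≥ 3. Then for any two distinct maximal chains A and B of T(a,b), the pattern of A and B with respect to ≺ has the form I^l A^{a-l} B^{a-l} or I^l B^{a-l} A^{a-l} for some 1 ≤ l ≤ a-1; consequently {A, B} is at most (a+1)-interlacing. -/
/-- The vertex set of the full b-ary tree `T(a,b)` of depth `a-1`:
vertices are addresses, i.e. lists over `Fin b` of length `< a`. -/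
def TreeVert (a b : ℕ) : Type := {l : List (Fin b) // l.length < a}

instance (a b : ℕ) : DecidableEq (TreeVert a b) := by
  unfold TreeVert; infer_instance

/-- The maximal chain through a vertex: the set of all its prefixes
(for a leaf, this is the whole root-to-leaf path). -/
def chainOf {a b : ℕ} (m : TreeVert a b) : Finset (TreeVert a b) :=
  (Finset.range (m.1.length + 1)).image fun i =>
    ⟨m.1.take i, by rw [List.length_take]; exact lt_of_le_of_lt (min_le_right _ _) m.2⟩

lemma mem_chainOf {a b : ℕ} {m x : TreeVert a b} : x ∈ chainOf m ↔ x.1 <+: m.1 := by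
  constructor
  · intro h
    rw [chainOf] at h; replace h := Finset.mem_image.mp h
    obtain ⟨i, _, h⟩ := h
    rw [← h]
    exact List.take_prefix i m.1
  · intro h
    rw [chainOf]; refine Finset.mem_image.mpr ?_
    refine ⟨x.1.length, Finset.mem_range.mpr (Nat.lt_succ_of_le h.length_le), ?_⟩
    exact Subtype.ext (List.prefix_iff_eq_take.mp h).symm
lemma construct (a b : ℕ) (ha : 3 ≤ a)
    (lt : TreeVert a b → TreeVert a b → Prop)
    (htri : ∀ u v, lt u v ∨ u = v ∨ lt v u)
    (hirr : ∀ u, ¬ lt u u)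
    (htrans : ∀ u v w, lt u v → lt v w → lt u w)
    (hdfs₁ : ∀ u v : TreeVert a b, u.1 <+: v.1 → u ≠ v → lt u v)
    (hdfs₂ : ∀ u v w : TreeVert a b, u.1 <+: w.1 → ¬ lt v u → ¬ lt w v → u.1 <+: v.1)
    (x y : TreeVert a b) (hx : x.1.length = a - 1) (hy : y.1.length = a - 1)
    (l : ℕ) (hl1 : 1 ≤ l) (hl2 : l ≤ a - 1)
    (hcomm : ∀ k, k < l → x.1.take k = y.1.take k)
    (hd : ∀ k, l ≤ k → k ≤ a - 1 → x.1.take k ≠ y.1.take k)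
    (hord : ∀ (u1 u2 : TreeVert a b), u1.1 = x.1.take l → u2.1 = y.1.take l → lt u1 u2) :
    ∃ v : Fin (2 * a - l) → TreeVert a b,
      (∀ i j : Fin (2 * a - l), i < j → lt (v i) (v j)) ∧
      ((chainOf x ∪ chainOf y : Finset (TreeVert a b)) : Set (TreeVert a b)) = Set.range v ∧
      (∀ i : Fin (2 * a - l),
          ((i : ℕ) < l → v i ∈ chainOf x ∩ chainOf y) ∧
          (l ≤ (i : ℕ) → (i : ℕ) < a → v i ∈ chainOf x \ chainOf y) ∧
          (a ≤ (i : ℕ) → v i ∈ chainOf y \ chainOf x)) := by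
  have hasym : ∀ u v, lt u v → ¬ lt v u := fun u v h h' => hirr u (htrans u v u h h')
  have hlen : ∀ (L : List (Fin b)), L.length = a - 1 → ∀ k : ℕ, (L.take k).length < a := by
    intro L hL k; rw [List.length_take, hL]; omega
  have hlenx : ∀ k, k ≤ a - 1 → (x.1.take k).length = k := by
    intro k hk; rw [List.length_take, hx]; omega
  have hleny : ∀ k, k ≤ a - 1 → (y.1.take k).length = k := by
    intro k hk; rw [List.length_take, hy]; omega
  have hpreL : ∀ (L : List (Fin b)) (k j : ℕ), k ≤ j → L.take k <+: L.take j := by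
    intro L k j h
    have := List.take_prefix k (L.take j)
    rwa [List.take_take, min_eq_left h] at this
  have hchain : ∀ (u v : TreeVert a b), u.1 <+: v.1 → u.1.length < v.1.length → lt u v := by
    intro u v hp hl
    refine hdfs₁ u v hp ?_
    intro h; rw [h] at hl; omega
  have hltL : ∀ (L : List (Fin b)), L.length = a - 1 → ∀ (u v : TreeVert a b) (k j : ℕ),
      u.1 = L.take k → v.1 = L.take j → k < j → j ≤ a - 1 → lt u v := by
    intro L hL u v k j hu hv hkj hj
    refine hchain u v ?_ ?_
    · rw [hu, hv]; exact hpreL L k j hkj.le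
    · rw [hu, hv, List.length_take, List.length_take, hL]; omega
  have hltc : ∀ (u v : TreeVert a b) (k j : ℕ), k < l → u.1 = x.1.take k → l ≤ j → j ≤ a - 1 →
      v.1 = y.1.take j → lt u v := by
    intro u v k j hk hu hj1 hj2 hv
    exact hltL y.1 hy u v k j (by rw [hu, hcomm k hk]) hv (by omega) hj2
  have hnx : ∀ (X : TreeVert a b) (k : ℕ), l ≤ k → k ≤ a - 1 → X.1 = x.1.take k → X ∉ chainOf y := by
    intro X k h1 h2 hX hmem
    have hpre := mem_chainOf.mp hmem
    rw [hX] at hpre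
    have h3 := List.prefix_iff_eq_take.mp hpre
    rw [hlenx k h2] at h3
    exact hd k h1 h2 h3
  have hny : ∀ (Y : TreeVert a b) (k : ℕ), l ≤ k → k ≤ a - 1 → Y.1 = y.1.take k → Y ∉ chainOf x := by
    intro Y k h1 h2 hY hmem
    have hpre := mem_chainOf.mp hmem
    rw [hY] at hpre
    have h3 := List.prefix_iff_eq_take.mp hpre
    rw [hleny k h2] at h3
    exact hd k h1 h2 h3.symm
  obtain ⟨uA, huA⟩ : ∃ u : TreeVert a b, u.1 = x.1.take l := ⟨⟨_, hlen x.1 hx l⟩, rfl⟩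
  obtain ⟨uB, huB⟩ : ∃ u : TreeVert a b, u.1 = y.1.take l := ⟨⟨_, hlen y.1 hy l⟩, rfl⟩
  have hAB : lt uA uB := hord uA uB huA huB
  have hsep : ∀ (X Y : TreeVert a b) (k j : ℕ), l ≤ k → k ≤ a - 1 → l ≤ j → j ≤ a - 1 →
      X.1 = x.1.take k → Y.1 = y.1.take j → lt X Y := by
    intro X Y k j hk1 hk2 hj1 hj2 hX hY
    have hpXA : uA.1 <+: X.1 := by rw [huA, hX]; exact hpreL x.1 l k hk1
    have hltAY : lt uA Y := by
      rcases eq_or_ne j l with h | h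
      · have : Y = uB := Subtype.ext (by rw [hY, huB, h])
        rw [this]; exact hAB
      · exact htrans _ uB _ hAB (hltL y.1 hy uB Y l j huB hY (by omega) hj2)
    have hYmem : Y ∈ chainOf y := mem_chainOf.mpr (by rw [hY]; exact List.take_prefix j y.1)
    have hne : X ≠ Y := fun h => hnx X k hk1 hk2 hX (h ▸ hYmem)
    rcases htri X Y with h | h | h
    · exact h
    · exact absurd h hne
    · exfalso
      have h1 : ¬ lt Y uA := hasym _ _ hltAY
      have h2 : ¬ lt X Y := hasym _ _ h
      have h3 : uA.1 <+: Y.1 := hdfs₂ uA Y X hpXA h1 h2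
      have h4 := List.prefix_iff_eq_take.mp h3
      rw [huA, hlenx l hl2, hY, List.take_take, min_eq_left hj1] at h4
      exact hd l le_rfl hl2 h4
  let v : Fin (2 * a - l) → TreeVert a b := fun i =>
    if h : (i : ℕ) < a then ⟨x.1.take i, hlen x.1 hx i⟩
    else ⟨y.1.take ((i : ℕ) - (a - l)), hlen y.1 hy _⟩
  have hvx : ∀ i : Fin (2 * a - l), (i : ℕ) < a → (v i).1 = x.1.take (i : ℕ) := by
    intro i h; simp only [v]; exact congrArg Subtype.val (dif_pos h)
  have hvy : ∀ i : Fin (2 * a - l), ¬ (i : ℕ) < a → (v i).1 = y.1.take ((i : ℕ) - (a - l)) := by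
    intro i h; simp only [v]; exact congrArg Subtype.val (dif_neg h)
  refine ⟨v, ?_, ?_, ?_⟩
  · intro i j hij
    have hij' : (i : ℕ) < (j : ℕ) := hij
    have hi2 : (i : ℕ) < 2 * a - l := i.2
    have hj2 : (j : ℕ) < 2 * a - l := j.2
    by_cases hja : (j : ℕ) < a
    · have hia : (i : ℕ) < a := by omega
      exact hltL x.1 hx (v i) (v j) i j (hvx i hia) (hvx j hja) hij' (by omega)
    · by_cases hia : (i : ℕ) < a
      · by_cases hil : (i : ℕ) < l
        · exact hltc (v i) (v j) i ((j : ℕ) - (a - l)) hil (hvx i hia) (by omega) (by omega) (hvy j hja)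
        · exact hsep (v i) (v j) i ((j : ℕ) - (a - l)) (by omega) (by omega) (by omega) (by omega)
            (hvx i hia) (hvy j hja)
      · exact hltL y.1 hy (v i) (v j) ((i : ℕ) - (a - l)) ((j : ℕ) - (a - l)) (hvy i hia)
          (hvy j hja) (by omega) (by omega)
  · ext z
    simp only [Finset.coe_union, Set.mem_union, Finset.mem_coe, Set.mem_range]
    constructor
    · rintro (hz | hz)
      · have hp := mem_chainOf.mp hz
        have hzl : z.1.length ≤ a - 1 := by rw [← hx]; exact hp.length_le
        have hlt : z.1.length < a := by omega
        refine ⟨⟨z.1.length, by omega⟩, Subtype.ext ?_⟩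
        rw [hvx ⟨z.1.length, by omega⟩ hlt]
        exact (List.prefix_iff_eq_take.mp hp).symm
      · have hp := mem_chainOf.mp hz
        have hzl : z.1.length ≤ a - 1 := by rw [← hy]; exact hp.length_le
        by_cases hzt : z.1.length < l
        · refine ⟨⟨z.1.length, by omega⟩, Subtype.ext ?_⟩
          rw [hvx ⟨z.1.length, by omega⟩ (show z.1.length < a by omega)]
          rw [hcomm z.1.length hzt]
          exact (List.prefix_iff_eq_take.mp hp).symm
        · refine ⟨⟨z.1.length + (a - l), by omega⟩, Subtype.ext ?_⟩
          rw [hvy ⟨z.1.length + (a - l), by omega⟩ (show ¬ z.1.length + (a - l) < a by omega)]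
          show y.1.take (z.1.length + (a - l) - (a - l)) = z.1
          rw [show z.1.length + (a - l) - (a - l) = z.1.length by omega]
          exact (List.prefix_iff_eq_take.mp hp).symm
    · rintro ⟨i, rfl⟩
      by_cases hia : (i : ℕ) < a
      · left; exact mem_chainOf.mpr (by rw [hvx i hia]; exact List.take_prefix _ _)
      · right; exact mem_chainOf.mpr (by rw [hvy i hia]; exact List.take_prefix _ _)
  · intro i
    have hi2 : (i : ℕ) < 2 * a - l := i.2
    refine ⟨?_, ?_, ?_⟩
    · intro hil
      have hia : (i : ℕ) < a := by omega
      refine Finset.mem_inter.mpr ⟨mem_chainOf.mpr (by rw [hvx i hia]; exact List.take_prefix _ _), ?_⟩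
      exact mem_chainOf.mpr (by rw [hvx i hia, hcomm i hil]; exact List.take_prefix _ _)
    · intro h1 h2
      refine Finset.mem_sdiff.mpr ⟨mem_chainOf.mpr (by rw [hvx i h2]; exact List.take_prefix _ _), ?_⟩
      exact hnx (v i) i h1 (by omega) (hvx i h2)
    · intro h1
      have hna : ¬ (i : ℕ) < a := by omega
      refine Finset.mem_sdiff.mpr ⟨mem_chainOf.mpr (by rw [hvy i hna]; exact List.take_prefix _ _), ?_⟩
      exact hny (v i) ((i : ℕ) - (a - l)) (by omega) (by omega) (hvy i hna)
lemma no_interlace (a b : ℕ) (ha : 3 ≤ a)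
    (lt : TreeVert a b → TreeVert a b → Prop)
    (hirr : ∀ u, ¬ lt u u)
    (htrans : ∀ u v w, lt u v → lt v w → lt u w)
    (A B : Finset (TreeVert a b))
    (l : ℕ) (hl2 : l ≤ a - 1)
    (v : Fin (2 * a - l) → TreeVert a b)
    (hmono : ∀ i j : Fin (2 * a - l), i < j → lt (v i) (v j))
    (hrange : ((A ∪ B : Finset (TreeVert a b)) : Set (TreeVert a b)) = Set.range v)
    (hpat : ∀ i : Fin (2 * a - l),
      (l ≤ (i : ℕ) → (i : ℕ) < a → v i ∈ A \ B) ∧ (a ≤ (i : ℕ) → v i ∈ B \ A))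
    (w : Fin (a + 2) → TreeVert a b)
    (hwmono : ∀ i j : Fin (a + 2), i < j → lt (w i) (w j))
    (hmemw : ∀ i, w i ∈ A ∪ B)
    (hkey : ∀ i j : Fin (a + 2), (i : ℕ) + 1 = (j : ℕ) →
      (w i ∈ A ∧ w j ∈ B) ∨ (w i ∈ B ∧ w j ∈ A)) :
    False := by
  have hasym : ∀ u v, lt u v → ¬ lt v u := fun u v h h' => hirr u (htrans u v u h h')
  have hexσ : ∀ i, ∃ k, v k = w i := by
    intro i
    have h : w i ∈ ((A ∪ B : Finset (TreeVert a b)) : Set (TreeVert a b)) := hmemw i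
    rw [hrange] at h
    exact h
  choose σ hσ using hexσ
  have hσmono : ∀ i j : Fin (a + 2), (i : ℕ) < (j : ℕ) → (σ i : ℕ) < (σ j : ℕ) := by
    intro i j hij
    have hw : lt (v (σ i)) (v (σ j)) := by rw [hσ i, hσ j]; exact hwmono i j hij
    rcases lt_trichotomy (σ i) (σ j) with h | h | h
    · exact h
    · rw [h] at hw; exact absurd hw (hirr _)
    · exact absurd (hmono _ _ h) (hasym _ _ hw)
  have hle : ∀ n : ℕ, ∀ i : Fin (a + 2), (i : ℕ) = n → n ≤ (σ i : ℕ) := by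
    intro n
    induction n with
    | zero => intro i _; exact Nat.zero_le _
    | succ n ih =>
      intro i hi
      have hi2 : (i : ℕ) < a + 2 := i.2
      have hn : n < a + 2 := by omega
      have h1 : n ≤ (σ ⟨n, hn⟩ : ℕ) := ih ⟨n, hn⟩ rfl
      have h2 : (σ ⟨n, hn⟩ : ℕ) < (σ i : ℕ) := hσmono ⟨n, hn⟩ i (show n < (i : ℕ) by omega)
      omega
  have hl0 : l < a + 2 := by omega
  have hl1' : l + 1 < a + 2 := by omega
  have hl2' : l + 2 < a + 2 := by omega
  have h0 : l ≤ (σ ⟨l, hl0⟩ : ℕ) := hle l ⟨l, hl0⟩ rfl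
  have h1 : l + 1 ≤ (σ ⟨l + 1, hl1'⟩ : ℕ) := hle (l + 1) ⟨l + 1, hl1'⟩ rfl
  have h2 : l + 2 ≤ (σ ⟨l + 2, hl2'⟩ : ℕ) := hle (l + 2) ⟨l + 2, hl2'⟩ rfl
  have h01 : (σ ⟨l, hl0⟩ : ℕ) < (σ ⟨l + 1, hl1'⟩ : ℕ) :=
    hσmono ⟨l, hl0⟩ ⟨l + 1, hl1'⟩ (show l < l + 1 by omega)
  have h12 : (σ ⟨l + 1, hl1'⟩ : ℕ) < (σ ⟨l + 2, hl2'⟩ : ℕ) :=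
    hσmono ⟨l + 1, hl1'⟩ ⟨l + 2, hl2'⟩ (show l + 1 < l + 2 by omega)
  by_cases hc : (σ ⟨l + 1, hl1'⟩ : ℕ) < a
  · have hc0 : (σ ⟨l, hl0⟩ : ℕ) < a := by omega
    have m0 : w ⟨l, hl0⟩ ∈ A \ B := by
      rw [← hσ ⟨l, hl0⟩]; exact (hpat _).1 h0 hc0
    have m1 : w ⟨l + 1, hl1'⟩ ∈ A \ B := by
      rw [← hσ ⟨l + 1, hl1'⟩]; exact (hpat _).1 (by omega) hc
    rcases hkey ⟨l, hl0⟩ ⟨l + 1, hl1'⟩ rfl with ⟨_, hb⟩ | ⟨hb, _⟩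
    · exact (Finset.mem_sdiff.mp m1).2 hb
    · exact (Finset.mem_sdiff.mp m0).2 hb
  · have hc2 : a ≤ (σ ⟨l + 2, hl2'⟩ : ℕ) := by omega
    have m1 : w ⟨l + 1, hl1'⟩ ∈ B \ A := by
      rw [← hσ ⟨l + 1, hl1'⟩]; exact (hpat _).2 (by omega)
    have m2 : w ⟨l + 2, hl2'⟩ ∈ B \ A := by
      rw [← hσ ⟨l + 2, hl2'⟩]; exact (hpat _).2 hc2
    rcases hkey ⟨l + 1, hl1'⟩ ⟨l + 2, hl2'⟩ rfl with ⟨ha1, _⟩ | ⟨_, ha2⟩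
    · exact (Finset.mem_sdiff.mp m1).2 ha1
    · exact (Finset.mem_sdiff.mp m2).2 ha2
/-- With respect to any DFS order `lt` on `T(a,b)` (`a ≥ 3`), the pattern
of two distinct maximal chains `A`, `B` is `Iˡ A^(a-l) B^(a-l)` or `Iˡ B^(a-l) A^(a-l)`
for some `1 ≤ l ≤ a-1`; consequently `{A,B}` is at most `(a+1)`-interlacing, i.e. not
`(a+2)`-interlacing. -/
theorem stmt_17 (a b : ℕ) (ha : 3 ≤ a)
    (lt : TreeVert a b → TreeVert a b → Prop)
    (htri : ∀ u v, lt u v ∨ u = v ∨ lt v u)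
    (hirr : ∀ u, ¬ lt u u)
    (htrans : ∀ u v w, lt u v → lt v w → lt u w)
    (hdfs₁ : ∀ u v : TreeVert a b, u.1 <+: v.1 → u ≠ v → lt u v)
    (hdfs₂ : ∀ u v w : TreeVert a b, u.1 <+: w.1 → ¬ lt v u → ¬ lt w v → u.1 <+: v.1)
    (A B : Finset (TreeVert a b))
    (leafA leafB : TreeVert a b)
    (hA : leafA.1.length = a - 1) (hB : leafB.1.length = a - 1)
    (hAchain : A = chainOf leafA) (hBchain : B = chainOf leafB)
    (hAB : A ≠ B) :
    (∃ l : ℕ, 1 ≤ l ∧ l ≤ a - 1 ∧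
      ∃ v : Fin (2 * a - l) → TreeVert a b,
        (∀ i j : Fin (2 * a - l), i < j → lt (v i) (v j)) ∧
        ((A ∪ B : Finset (TreeVert a b)) : Set (TreeVert a b)) = Set.range v ∧
        ((∀ i : Fin (2 * a - l),
            ((i : ℕ) < l → v i ∈ A ∩ B) ∧
            (l ≤ (i : ℕ) → (i : ℕ) < a → v i ∈ A \ B) ∧
            (a ≤ (i : ℕ) → v i ∈ B \ A)) ∨
         (∀ i : Fin (2 * a - l),
            ((i : ℕ) < l → v i ∈ A ∩ B) ∧
            (l ≤ (i : ℕ) → (i : ℕ) < a → v i ∈ B \ A) ∧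
            (a ≤ (i : ℕ) → v i ∈ A \ B)))) ∧
    ¬ ∃ (e₁ e₂ : Finset (TreeVert a b)), e₁ ∈ ({A, B} : Set (Finset (TreeVert a b))) ∧
        e₂ ∈ ({A, B} : Set (Finset (TreeVert a b))) ∧ e₁ ≠ e₂ ∧
        ∃ w : Fin (a + 2) → TreeVert a b,
          (∀ i j : Fin (a + 2), i < j → lt (w i) (w j)) ∧
          ∀ i : Fin (a + 2), (Even (i : ℕ) → w i ∈ e₁) ∧ (¬ Even (i : ℕ) → w i ∈ e₂) := by
  subst hAchain hBchain
  have hne : leafA.1 ≠ leafB.1 := by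
    intro h
    exact hAB (by rw [Subtype.ext h])
  have hfull : leafA.1.take (a - 1) ≠ leafB.1.take (a - 1) := by
    rw [List.take_of_length_le (le_of_eq hA), List.take_of_length_le (le_of_eq hB)]
    exact hne
  have hex : ∃ k, leafA.1.take k ≠ leafB.1.take k := ⟨a - 1, hfull⟩
  set l := Nat.find hex with hldef
  have hld : leafA.1.take l ≠ leafB.1.take l := Nat.find_spec hex
  have hcomm : ∀ k, k < l → leafA.1.take k = leafB.1.take k := by
    intro k hk
    exact not_not.mp (Nat.find_min hex hk)
  have hl2 : l ≤ a - 1 := Nat.find_min' hex hfull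
  have hl1 : 1 ≤ l := by
    rcases Nat.eq_zero_or_pos l with h | h
    · exfalso; apply hld; rw [h]; simp
    · exact h
  have hd : ∀ k, l ≤ k → k ≤ a - 1 → leafA.1.take k ≠ leafB.1.take k := by
    intro k h1 _ heq
    apply hld
    have h3 : (leafA.1.take k).take l = (leafB.1.take k).take l := by rw [heq]
    rwa [List.take_take, List.take_take, min_eq_left h1] at h3
  have hd' : ∀ k, l ≤ k → k ≤ a - 1 → leafB.1.take k ≠ leafA.1.take k :=
    fun k h1 h2 h => hd k h1 h2 h.symm
  have hcomm' : ∀ k, k < l → leafB.1.take k = leafA.1.take k := fun k hk => (hcomm k hk).symm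
  have hlen : ∀ (L : List (Fin b)), L.length = a - 1 → ∀ k : ℕ, (L.take k).length < a := by
    intro L hL k; rw [List.length_take, hL]; omega
  obtain ⟨uA, huA⟩ : ∃ u : TreeVert a b, u.1 = leafA.1.take l := ⟨⟨_, hlen _ hA l⟩, rfl⟩
  obtain ⟨uB, huB⟩ : ∃ u : TreeVert a b, u.1 = leafB.1.take l := ⟨⟨_, hlen _ hB l⟩, rfl⟩
  have huAB : uA ≠ uB := fun h => hld (by rw [← huA, ← huB, h])
  have hkey0 : ∃ v : Fin (2 * a - l) → TreeVert a b,
      (∀ i j : Fin (2 * a - l), i < j → lt (v i) (v j)) ∧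
      ((chainOf leafA ∪ chainOf leafB : Finset (TreeVert a b)) : Set (TreeVert a b)) = Set.range v ∧
      ((∀ i : Fin (2 * a - l),
          ((i : ℕ) < l → v i ∈ chainOf leafA ∩ chainOf leafB) ∧
          (l ≤ (i : ℕ) → (i : ℕ) < a → v i ∈ chainOf leafA \ chainOf leafB) ∧
          (a ≤ (i : ℕ) → v i ∈ chainOf leafB \ chainOf leafA)) ∨
       (∀ i : Fin (2 * a - l),
          ((i : ℕ) < l → v i ∈ chainOf leafA ∩ chainOf leafB) ∧
          (l ≤ (i : ℕ) → (i : ℕ) < a → v i ∈ chainOf leafB \ chainOf leafA) ∧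
          (a ≤ (i : ℕ) → v i ∈ chainOf leafA \ chainOf leafB))) := by
    rcases htri uA uB with hlt | heq | hlt
    · obtain ⟨v, hm1, hm2, hm3⟩ := construct a b ha lt htri hirr htrans hdfs₁ hdfs₂ leafA leafB
        hA hB l hl1 hl2 hcomm hd
        (fun u1 u2 hu1 hu2 => by
          rw [show u1 = uA from Subtype.ext (hu1.trans huA.symm),
            show u2 = uB from Subtype.ext (hu2.trans huB.symm)]
          exact hlt)
      exact ⟨v, hm1, hm2, Or.inl hm3⟩
    · exact absurd heq huAB
    · obtain ⟨v, hm1, hm2, hm3⟩ := construct a b ha lt htri hirr htrans hdfs₁ hdfs₂ leafB leafA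
        hB hA l hl1 hl2 hcomm' hd'
        (fun u1 u2 hu1 hu2 => by
          rw [show u1 = uB from Subtype.ext (hu1.trans huB.symm),
            show u2 = uA from Subtype.ext (hu2.trans huA.symm)]
          exact hlt)
      refine ⟨v, hm1, ?_, Or.inr ?_⟩
      · rwa [Finset.union_comm] at hm2
      · intro i
        obtain ⟨p1, p2, p3⟩ := hm3 i
        refine ⟨fun h => ?_, p2, p3⟩
        have := Finset.mem_inter.mp (p1 h)
        exact Finset.mem_inter.mpr ⟨this.2, this.1⟩
  obtain ⟨v, hmono, hrange, hpat⟩ := hkey0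
  refine ⟨⟨l, hl1, hl2, v, hmono, hrange, hpat⟩, ?_⟩
  rintro ⟨e₁, e₂, he₁, he₂, hnee, w, hwm, hwalt⟩
  simp only [Set.mem_insert_iff, Set.mem_singleton_iff] at he₁ he₂
  have hcases : (e₁ = chainOf leafA ∧ e₂ = chainOf leafB) ∨
      (e₁ = chainOf leafB ∧ e₂ = chainOf leafA) := by
    rcases he₁ with h1 | h1 <;> rcases he₂ with h2 | h2
    · exact absurd (h1.trans h2.symm) hnee
    · exact Or.inl ⟨h1, h2⟩
    · exact Or.inr ⟨h1, h2⟩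
    · exact absurd (h1.trans h2.symm) hnee
  have hpair : ∀ i j : Fin (a + 2), (i : ℕ) + 1 = (j : ℕ) →
      (w i ∈ e₁ ∧ w j ∈ e₂) ∨ (w i ∈ e₂ ∧ w j ∈ e₁) := by
    intro i j hij
    rcases Nat.even_or_odd (i : ℕ) with hi | hi
    · left
      refine ⟨(hwalt i).1 hi, (hwalt j).2 ?_⟩
      rw [← hij, Nat.even_add_one]
      exact fun h => h hi
    · right
      have hi' : ¬ Even (i : ℕ) := Nat.not_even_iff_odd.mpr hi
      refine ⟨(hwalt i).2 hi', (hwalt j).1 ?_⟩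
      rw [← hij, Nat.even_add_one]
      exact hi'
  have hkeyAB : ∀ i j : Fin (a + 2), (i : ℕ) + 1 = (j : ℕ) →
      (w i ∈ chainOf leafA ∧ w j ∈ chainOf leafB) ∨
      (w i ∈ chainOf leafB ∧ w j ∈ chainOf leafA) := by
    intro i j hij
    rcases hcases with ⟨ha1, ha2⟩ | ⟨ha1, ha2⟩
    · rw [← ha1, ← ha2]; exact hpair i j hij
    · rw [← ha2, ← ha1]; exact (hpair i j hij).symm
  have hmemw : ∀ i, w i ∈ chainOf leafA ∪ chainOf leafB := by
    intro i
    rcases Nat.even_or_odd (i : ℕ) with hi | hi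
    · have hm := (hwalt i).1 hi
      rcases hcases with ⟨h1, _⟩ | ⟨h1, _⟩
      · exact Finset.mem_union_left _ (h1 ▸ hm)
      · exact Finset.mem_union_right _ (h1 ▸ hm)
    · have hm := (hwalt i).2 (Nat.not_even_iff_odd.mpr hi)
      rcases hcases with ⟨_, h2⟩ | ⟨_, h2⟩
      · exact Finset.mem_union_right _ (h2 ▸ hm)
      · exact Finset.mem_union_left _ (h2 ▸ hm)
  rcases hpat with hp | hp
  · exact no_interlace a b ha lt hirr htrans (chainOf leafA) (chainOf leafB) l hl2 v hmono hrange
      (fun i => ⟨(hp i).2.1, (hp i).2.2⟩) w hwm hmemw hkeyAB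
  · refine no_interlace a b ha lt hirr htrans (chainOf leafB) (chainOf leafA) l hl2 v hmono ?_
      (fun i => ⟨(hp i).2.1, (hp i).2.2⟩) w hwm ?_ ?_
    · rw [Finset.union_comm]; exact hrange
    · intro i; rw [Finset.union_comm]; exact hmemw i
    · intro i j hij; exact ((hkeyAB i j hij)).symm
end

section
/- Suppose S_1, ..., S_l ⊆ R^d are nonempty finite sets in skewed position, i.e., dim aff(S_1 ∪ ... ∪ S_l) = l - 1 + Σ_i dim aff(S_i). If each S_i is affinely independent, then S_1 ∪ ... ∪ S_l is affinely independent, and the geometric join S_1 * ... * S_l (the set of convex combinations Σ λ_i p_i with p_i ∈ conv(S_i), λ_i ≥ 0, Σ λ_i = 1) equals conv(S_1 ∪ ... ∪ S_l). -/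
/-- If nonempty finite sets `S 0, …, S (l-1) ⊆ ℝ^d` are in skewed
position, i.e. `dim aff(⋃ i, S i) = l - 1 + Σ i, dim aff(S i)`, and each `S i` is
affinely independent, then their union is affinely independent and their geometric
join (the set of convex combinations `Σ λ i • p i` with `p i ∈ conv(S i)`) equals
`conv(⋃ i, S i)`. -/
theorem stmt_19 (d l : ℕ) (hl : 1 ≤ l) (S : Fin l → Finset (Fin d → ℝ))
    (hne : ∀ i, (S i).Nonempty)
    (hindep : ∀ i, AffineIndependent ℝ
      (Subtype.val : ((S i : Set (Fin d → ℝ))) → (Fin d → ℝ)))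
    (hskew : Module.finrank ℝ
        (affineSpan ℝ (⋃ i, (S i : Set (Fin d → ℝ)))).direction =
      l - 1 + ∑ i, Module.finrank ℝ
        (affineSpan ℝ ((S i : Set (Fin d → ℝ)))).direction) :
    AffineIndependent ℝ
      (Subtype.val : (⋃ i, (S i : Set (Fin d → ℝ))) → (Fin d → ℝ)) ∧
    {x : Fin d → ℝ | ∃ (lam : Fin l → ℝ) (p : Fin l → (Fin d → ℝ)),
        (∀ i, 0 ≤ lam i) ∧ (∑ i, lam i = 1) ∧
        (∀ i, p i ∈ convexHull ℝ (S i : Set (Fin d → ℝ))) ∧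
        x = ∑ i, lam i • p i} =
      convexHull ℝ (⋃ i, (S i : Set (Fin d → ℝ))) := by
  classical
  constructor
  · -- affine independence of the union
    set T : Finset (Fin d → ℝ) := Finset.univ.biUnion S with hTdef
    have hT : (⋃ i, (S i : Set (Fin d → ℝ))) = (T : Set (Fin d → ℝ)) := by
      simp [hTdef]
    have hcardle : T.card ≤ ∑ i, (S i).card := Finset.card_biUnion_le
    have hcardpos : ∀ i, 1 ≤ (S i).card := fun i => Finset.card_pos.2 (hne i)
    have hTpos : 1 ≤ T.card := by
      have : ((S ⟨0, hl⟩).Nonempty) := hne _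
      obtain ⟨x, hx⟩ := this
      exact Finset.card_pos.2 ⟨x, Finset.mem_biUnion.2 ⟨⟨0, hl⟩, Finset.mem_univ _, hx⟩⟩
    have hci : ∀ i, Module.finrank ℝ
        (affineSpan ℝ ((S i : Set (Fin d → ℝ)))).direction = (S i).card - 1 := by
      intro i
      rw [direction_affineSpan, ← Subtype.range_val (s := ((S i : Set (Fin d → ℝ))))]
      exact (hindep i).finrank_vectorSpan (by simp [Nat.sub_add_cancel (hcardpos i)])
    have hsumcards : ∑ i, (S i).card = (∑ i, ((S i).card - 1)) + l := by
      have h1 : ∑ i, (S i).card = ∑ i, (((S i).card - 1) + 1) :=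
        Finset.sum_congr rfl fun i _ => (Nat.sub_add_cancel (hcardpos i)).symm
      rw [h1, Finset.sum_add_distrib]
      simp
    have hskew' : Module.finrank ℝ (vectorSpan ℝ (T : Set (Fin d → ℝ)))
        = (∑ i, (S i).card) - 1 := by
      rw [← direction_affineSpan, ← hT, hskew]
      have h2 : ∑ i, Module.finrank ℝ
          (affineSpan ℝ ((S i : Set (Fin d → ℝ)))).direction = ∑ i, ((S i).card - 1) :=
        Finset.sum_congr rfl fun i _ => hci i
      rw [h2]
      omega
    have hub : Module.finrank ℝ (vectorSpan ℝ (T : Set (Fin d → ℝ))) ≤ T.card - 1 := by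
      rw [← Subtype.range_val (s := (T : Set (Fin d → ℝ)))]
      exact finrank_vectorSpan_range_le ℝ _ (by simp [Nat.sub_add_cancel hTpos])
    have hcard : T.card = ∑ i, (S i).card := by omega
    have hcT : Fintype.card ((T : Set (Fin d → ℝ))) = (T.card - 1) + 1 := by
      simp [Nat.sub_add_cancel hTpos]
    rw [hT]
    refine (affineIndependent_iff_finrank_vectorSpan_eq ℝ _ hcT).2 ?_
    rw [Subtype.range_val]
    omega
  · -- join = convex hull
    apply Set.Subset.antisymm
    · rintro x ⟨lam, p, hlam, hsum1, hp, rfl⟩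
      exact (convex_convexHull ℝ _).sum_mem (fun i _ => hlam i) hsum1
        (fun i _ => convexHull_mono (Set.subset_iUnion _ i) (hp i))
    · apply convexHull_min
      · -- union ⊆ join
        intro x hx
        obtain ⟨j, hj⟩ := Set.mem_iUnion.1 hx
        refine ⟨fun i => if i = j then 1 else 0,
          fun i => if i = j then x else (hne i).choose, ?_, ?_, ?_, ?_⟩
        · intro i; by_cases h : i = j <;> simp [h]
        · simp
        · intro i
          by_cases h : i = j
          · subst h; simp only [if_pos rfl]; exact subset_convexHull ℝ _ hj
          · simp only [if_neg h]
            exact subset_convexHull ℝ _ (hne i).choose_spec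
        · rw [Finset.sum_eq_single j]
          · simp
          · intro i _ h; simp [h]
          · intro h; exact absurd (Finset.mem_univ j) h
      · -- join is convex
        rintro x ⟨lam, p, hlam, hsum1, hp, rfl⟩ y ⟨mu, q, hmu, hsum2, hq, rfl⟩ a b ha hb hab
        set nu : Fin l → ℝ := fun i => a * lam i + b * mu i with hnu
        have hnu0 : ∀ i, 0 ≤ nu i := fun i =>
          add_nonneg (mul_nonneg ha (hlam i)) (mul_nonneg hb (hmu i))
        set r : Fin l → (Fin d → ℝ) := fun i =>
          if h : nu i = 0 then (hne i).choose
          else (a * lam i / nu i) • p i + (b * mu i / nu i) • q i with hr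
        have key : ∀ i, nu i • r i = (a * lam i) • p i + (b * mu i) • q i := by
          intro i
          by_cases h : nu i = 0
          · have hnui : a * lam i + b * mu i = 0 := h
            have h1 : a * lam i = 0 ∧ b * mu i = 0 := by
              constructor <;>
                linarith [mul_nonneg ha (hlam i), mul_nonneg hb (hmu i)]
            rw [hr]; simp only [dif_pos h]
            rw [h, h1.1, h1.2]; simp
          · rw [hr]; simp only [dif_neg h]
            rw [smul_add, smul_smul, smul_smul, mul_div_cancel₀ _ h, mul_div_cancel₀ _ h]
        refine ⟨nu, r, hnu0, ?_, ?_, ?_⟩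
        · calc ∑ i, nu i = ∑ i, (a * lam i + b * mu i) := rfl
            _ = a * ∑ i, lam i + b * ∑ i, mu i := by
                rw [Finset.sum_add_distrib, ← Finset.mul_sum, ← Finset.mul_sum]
            _ = 1 := by rw [hsum1, hsum2]; simpa using hab
        · intro i
          by_cases h : nu i = 0
          · rw [hr]; simp only [dif_pos h]
            exact subset_convexHull ℝ _ (hne i).choose_spec
          · rw [hr]; simp only [dif_neg h]
            refine (convex_convexHull ℝ _) (hp i) (hq i)
              (div_nonneg (mul_nonneg ha (hlam i)) (hnu0 i))
              (div_nonneg (mul_nonneg hb (hmu i)) (hnu0 i)) ?_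
            rw [← add_div]
            exact div_self h
        · rw [Finset.smul_sum, Finset.smul_sum, ← Finset.sum_add_distrib]
          exact Finset.sum_congr rfl fun i _ => by rw [key i, smul_smul, smul_smul]
end
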